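/- The logistic L₂E loss L is globally Lipschitz continuous on ℝ^{p+1} with Lipschitz constant σ₁/(2√n), where σ₁ is the operator (largest singular value) norm of X̃; that is, |L(θ) − L(θ′)| ≤ (σ₁/(2√n))·‖θ − θ′‖₂ for all θ, θ′ ∈ ℝ^{p+1}. -/

import Mathlib

open Finset

/-- The logistic function `F(u) = 1/(1 + exp(-u))`. -/
noncomputable def logisticF (u : ℝ) : ℝ := 1 / (1 + Real.exp (-u))

/-- The logistic L₂E loss `L(θ) = (1/n)∑ᵢ (yᵢ − F(x̃ᵢᵀθ))²` on Euclidean space. -/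
noncomputable def L2Eloss {n p : ℕ} (X : Matrix (Fin n) (Fin (p+1)) ℝ)
    (y : Fin n → ℝ) (θ : EuclideanSpace ℝ (Fin (p+1))) : ℝ :=
  (1/(n:ℝ)) * ∑ i, (y i - logisticF (∑ j, X i j * θ j))^2

/-- The largest singular value (Euclidean operator norm) of a matrix. -/
noncomputable def sigma1 {n m : ℕ} (X : Matrix (Fin n) (Fin m) ℝ) : ℝ :=
  ‖LinearMap.toContinuousLinearMap (Matrix.toEuclideanLin X)‖



lemma den_pos (u : ℝ) : 0 < 1 + Real.exp (-u) := by positivity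

lemma logisticF_mem (u : ℝ) : logisticF u ∈ Set.Ioo (0:ℝ) 1 := by
  unfold logisticF
  constructor
  · positivity
  · rw [div_lt_one (den_pos u)]
    linarith [Real.exp_pos (-u)]

lemma hasDerivAt_logisticF (u : ℝ) :
    HasDerivAt logisticF (Real.exp (-u) / (1 + Real.exp (-u))^2) u := by
  have h1 : HasDerivAt (fun u : ℝ => 1 + Real.exp (-u)) (-Real.exp (-u)) u := by
    simpa using (Real.hasDerivAt_exp (-u)).comp u ((hasDerivAt_id u).neg) |>.const_add 1
  have h2 := h1.inv (ne_of_gt (den_pos u))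
  have : logisticF = fun u : ℝ => (1 + Real.exp (-u))⁻¹ := by
    funext v; simp [logisticF, one_div]
  rw [this]
  exact h2.congr_deriv (by ring)
lemma deriv_bound (u : ℝ) : |Real.exp (-u) / (1 + Real.exp (-u))^2| ≤ 1/4 := by
  have he := Real.exp_pos (-u)
  rw [abs_of_nonneg (by positivity), div_le_iff₀ (by positivity)]
  nlinarith [sq_nonneg (1 - Real.exp (-u))]

lemma lipschitz_logisticF : LipschitzWith (1/4) logisticF := by
  apply lipschitzWith_of_nnnorm_deriv_le
  · intro u; exact (hasDerivAt_logisticF u).differentiableAt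
  · intro u
    rw [(hasDerivAt_logisticF u).deriv, ← NNReal.coe_le_coe, coe_nnnorm]
    push_cast
    rw [Real.norm_eq_abs]
    exact deriv_bound u

lemma logisticF_lip (u v : ℝ) : |logisticF u - logisticF v| ≤ |u - v| / 4 := by
  have := lipschitz_logisticF.dist_le_mul u v
  simpa [Real.dist_eq, div_eq_inv_mul] using this

lemma term_lip {y u v : ℝ} (hy : y = 0 ∨ y = 1) :
    |(y - logisticF u)^2 - (y - logisticF v)^2| ≤ |u - v| / 2 := by
  have hu := logisticF_mem u
  have hv := logisticF_mem v
  have key : (y - logisticF u)^2 - (y - logisticF v)^2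
      = (2*y - logisticF u - logisticF v) * (logisticF v - logisticF u) := by ring
  rw [key, abs_mul]
  have h1 : |2*y - logisticF u - logisticF v| ≤ 2 := by
    rcases hy with h | h <;> rw [h, abs_le] <;>
      constructor <;> nlinarith [hu.1, hu.2, hv.1, hv.2]
  have h2 : |logisticF v - logisticF u| ≤ |u - v| / 4 := by
    rw [abs_sub_comm]; exact logisticF_lip u v
  calc |2*y - logisticF u - logisticF v| * |logisticF v - logisticF u|
      ≤ 2 * (|u - v| / 4) := by
        apply mul_le_mul h1 h2 (abs_nonneg _) (by norm_num)
    _ = |u - v| / 2 := by ring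

/-- the logistic L₂E loss is globally Lipschitz with constant `σ₁/(2√n)`. -/
theorem stmt_8 (n p : ℕ) (hn : 0 < n)
    (X : Matrix (Fin n) (Fin (p+1)) ℝ) (y : Fin n → ℝ)
    (hy : ∀ i, y i = 0 ∨ y i = 1) :
    ∀ θ θ' : EuclideanSpace ℝ (Fin (p+1)),
      |L2Eloss X y θ - L2Eloss X y θ'| ≤ (sigma1 X / (2 * Real.sqrt n)) * ‖θ - θ'‖ := by
  intro θ θ'
  have hn' : (0:ℝ) < n := Nat.cast_pos.mpr hn
  set v : Fin n → ℝ := fun i => ∑ j, X i j * (θ j - θ' j) with hvdef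
  have step1 : |L2Eloss X y θ - L2Eloss X y θ'| ≤ (1/(n:ℝ)) * ∑ i, |v i| / 2 := by
    have hL : L2Eloss X y θ - L2Eloss X y θ' =
        (1/(n:ℝ)) * ∑ i, ((y i - logisticF (∑ j, X i j * θ j))^2
          - (y i - logisticF (∑ j, X i j * θ' j))^2) := by
      unfold L2Eloss
      rw [Finset.sum_sub_distrib]
      ring
    rw [hL, abs_mul, abs_of_nonneg (by positivity : (0:ℝ) ≤ 1/(n:ℝ))]
    apply mul_le_mul_of_nonneg_left _ (by positivity)
    refine le_trans (Finset.abs_sum_le_sum_abs _ _) (Finset.sum_le_sum fun i _ => ?_)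
    have hvi : (∑ j, X i j * θ j) - (∑ j, X i j * θ' j) = v i := by
      rw [hvdef, ← Finset.sum_sub_distrib]
      exact Finset.sum_congr rfl fun j _ => by ring
    have := term_lip (u := ∑ j, X i j * θ j) (v := ∑ j, X i j * θ' j) (hy i)
    rwa [hvi] at this
  have step2 : ∑ i, |v i| ≤ Real.sqrt n * Real.sqrt (∑ i, (v i)^2) := by
    have h := sq_sum_le_card_mul_sum_sq (s := (Finset.univ : Finset (Fin n)))
      (f := fun i => |v i|)
    simp only [Finset.card_univ, Fintype.card_fin, sq_abs] at h
    have h2 : ∑ i, |v i| = Real.sqrt ((∑ i, |v i|)^2) :=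
      (Real.sqrt_sq (by positivity)).symm
    rw [h2, ← Real.sqrt_mul (by positivity) (∑ i, (v i)^2)]
    apply Real.sqrt_le_sqrt
    exact_mod_cast h
  have step3 : Real.sqrt (∑ i, (v i)^2) = ‖Matrix.toEuclideanLin X (θ - θ')‖ := by
    rw [EuclideanSpace.norm_eq]
    congr 1
    refine Finset.sum_congr rfl fun i _ => ?_
    have : (Matrix.toEuclideanLin X (θ - θ')) i = v i := by
      rfl
    rw [this, Real.norm_eq_abs, sq_abs]
  have step4 : ‖Matrix.toEuclideanLin X (θ - θ')‖ ≤ sigma1 X * ‖θ - θ'‖ := by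
    have := (LinearMap.toContinuousLinearMap (Matrix.toEuclideanLin X)).le_opNorm (θ - θ')
    simpa [sigma1] using this
  have hs : (0:ℝ) < Real.sqrt n := Real.sqrt_pos.mpr hn'
  have hsq : Real.sqrt n * Real.sqrt n = (n:ℝ) := Real.mul_self_sqrt hn'.le
  have hsum : ∑ i, |v i| ≤ Real.sqrt n * (sigma1 X * ‖θ - θ'‖) := by
    refine step2.trans ?_
    rw [step3]
    exact mul_le_mul_of_nonneg_left step4 hs.le
  calc |L2Eloss X y θ - L2Eloss X y θ'| ≤ (1/(n:ℝ)) * ∑ i, |v i| / 2 := step1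
    _ = (∑ i, |v i|) / (2*(n:ℝ)) := by rw [← Finset.sum_div]; ring
    _ ≤ (Real.sqrt n * (sigma1 X * ‖θ - θ'‖)) / (2*(n:ℝ)) := by gcongr
    _ = (sigma1 X / (2 * Real.sqrt n)) * ‖θ - θ'‖ := by
        field_simp
        linear_combination (sigma1 X * ‖θ - θ'‖) * hsq
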